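/- Let S, T be positive definite symmetric n×n matrices with S ⪯ T. Then tr(T^{-1/2}(T − S)) ≤ 2(tr(√T) − tr(√S)). -/

import Mathlib

open Matrix
open scoped Classical

/-- The positive semidefinite square root of a matrix (zero if not PSD). -/
noncomputable def sqrtM {n : ℕ} (A : Matrix (Fin n) (Fin n) ℝ) : Matrix (Fin n) (Fin n) ℝ :=
  if h : A.PosSemidef then
    h.1.eigenvectorUnitary.1 * diagonal ((↑) ∘ (√·) ∘ h.1.eigenvalues) *
      (star h.1.eigenvectorUnitary : Matrix (Fin n) (Fin n) ℝ) else 0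

/-- Euclidean norm of a vector. -/
noncomputable def euclNorm {n : ℕ} (v : Fin n → ℝ) : ℝ := Real.sqrt (v ⬝ᵥ v)

/-- The ℓ₂ operator (spectral) norm of a matrix. -/
noncomputable def opNorm {n : ℕ} (A : Matrix (Fin n) (Fin n) ℝ) : ℝ :=
  ⨆ u : {u : Fin n → ℝ // euclNorm u ≤ 1}, euclNorm (A *ᵥ u)

lemma sqrtM_mul_self_aux {n : ℕ} {A : Matrix (Fin n) (Fin n) ℝ} (h : A.PosSemidef) :
    sqrtM A * sqrtM A = A := by
  rw [sqrtM, dif_pos h]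
  have hU : (star h.1.eigenvectorUnitary : Matrix (Fin n) (Fin n) ℝ) * h.1.eigenvectorUnitary.1 = 1 :=
    Unitary.coe_star_mul_self _
  conv_rhs => rw [h.1.spectral_theorem]
  rw [Unitary.conjStarAlgAut_apply]
  calc _ = h.1.eigenvectorUnitary.1 * (diagonal ((↑) ∘ (√·) ∘ h.1.eigenvalues) *
        ((star h.1.eigenvectorUnitary : Matrix (Fin n) (Fin n) ℝ) * h.1.eigenvectorUnitary.1) *
        diagonal ((↑) ∘ (√·) ∘ h.1.eigenvalues)) *
        (star h.1.eigenvectorUnitary : Matrix (Fin n) (Fin n) ℝ) := by simp only [mul_assoc]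
    _ = _ := by
      rw [hU, mul_one, diagonal_mul_diagonal]
      congr 3
      funext i
      simp [Real.mul_self_sqrt (h.eigenvalues_nonneg i)]

lemma posSemidef_sqrtM_aux {n : ℕ} {A : Matrix (Fin n) (Fin n) ℝ} (h : A.PosSemidef) :
    (sqrtM A).PosSemidef := by
  rw [sqrtM, dif_pos h]
  have hD : (diagonal ((↑) ∘ (√·) ∘ h.1.eigenvalues) : Matrix (Fin n) (Fin n) ℝ).PosSemidef := by
    rw [posSemidef_diagonal_iff]
    intro i
    simp [Real.sqrt_nonneg]
  have := hD.mul_mul_conjTranspose_same h.1.eigenvectorUnitary.1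
  simpa [Unitary.coe_star, star_eq_conjTranspose] using this

lemma trace_nonneg_of_psd {n : ℕ} {M : Matrix (Fin n) (Fin n) ℝ}
    (hM : M.PosSemidef) : 0 ≤ M.trace := by
  rw [Matrix.trace]
  apply Finset.sum_nonneg
  intro i _
  have := hM.2 (Finsupp.single i 1)
  simpa [dotProduct, Pi.single_apply, Matrix.mulVec, Matrix.diag] using this

theorem trace_invsqrt_mul_diff_le {n : ℕ} {S T : Matrix (Fin n) (Fin n) ℝ}
    (hS : S.PosDef) (hT : T.PosDef) (hST : (T - S).PosSemidef) :
    ((sqrtM T)⁻¹ * (T - S)).trace ≤ 2 * ((sqrtM T).trace - (sqrtM S).trace) := by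
  have hTs := hT.posSemidef
  have hSs := hS.posSemidef
  set A := sqrtM T with hA
  set B := sqrtM S with hB
  have hAA : A * A = T := sqrtM_mul_self_aux hTs
  have hBB : B * B = S := sqrtM_mul_self_aux hSs
  have hApsd : A.PosSemidef := posSemidef_sqrtM_aux hTs
  have hBpsd : B.PosSemidef := posSemidef_sqrtM_aux hSs
  have hdet : IsUnit A.det := by
    have hd : A.det * A.det = T.det := by rw [← Matrix.det_mul, hAA]
    refine isUnit_iff_ne_zero.mpr fun h => ?_
    rw [h, mul_zero] at hd
    exact hT.det_pos.ne hd
  have hinvA : A⁻¹ * A = 1 := Matrix.nonsing_inv_mul A hdet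
  have hAinv' : A * A⁻¹ = 1 := Matrix.mul_nonsing_inv A hdet
  have hAinvPsd : A⁻¹.PosSemidef := hApsd.inv
  -- the key nonnegative trace
  have hC : (A - B)ᴴ = A - B := by
    rw [conjTranspose_sub, hApsd.1, hBpsd.1]
  have hpsd : ((A - B)ᴴ * A⁻¹ * (A - B)).PosSemidef :=
    hAinvPsd.conjTranspose_mul_mul_same (A - B)
  have hkey : 0 ≤ ((A⁻¹ * ((A - B) * (A - B)))).trace := by
    have : ((A - B)ᴴ * A⁻¹ * (A - B)).trace = (A⁻¹ * ((A - B) * (A - B))).trace := by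
      rw [hC, Matrix.trace_mul_cycle, ← mul_assoc]
      exact Matrix.trace_mul_cycle _ _ _
    rw [← this]
    exact trace_nonneg_of_psd hpsd
  -- expand the key trace
  have hexp : (A⁻¹ * ((A - B) * (A - B))).trace
      = A.trace - 2 * B.trace + (A⁻¹ * (B * B)).trace := by
    have e1 : (A - B) * (A - B) = A * A - A * B - B * A + B * B := by noncomm_ring
    have e2 : A⁻¹ * (A * A) = A := by rw [← mul_assoc, hinvA, one_mul]
    have e3 : A⁻¹ * (A * B) = B := by rw [← mul_assoc, hinvA, one_mul]
    have e4 : (A⁻¹ * (B * A)).trace = B.trace := by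
      rw [← mul_assoc, Matrix.trace_mul_cycle, hAinv', one_mul]
    rw [e1]
    simp only [mul_add, mul_sub, Matrix.trace_add, Matrix.trace_sub, e2, e3, e4]
    ring
  -- expand the LHS
  have hlhs : (A⁻¹ * (T - S)).trace = A.trace - (A⁻¹ * (B * B)).trace := by
    have e2 : A⁻¹ * (A * A) = A := by rw [← mul_assoc, hinvA, one_mul]
    rw [← hAA, ← hBB, mul_sub, Matrix.trace_sub, e2]
  rw [hlhs]
  rw [hexp] at hkey
  linarith
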